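/- Under the RU-QLP setup, for every i = 1,…,k the principal angles θ_i between the column spaces of Q and U_k satisfy cos θ_i ≥ 1 / √(1 + δ_i^{4q+4} ‖Φ̂2 Φ̂1^†‖_2²) and tan θ_i ≤ δ_i^{2q+2} ‖Φ̂2 Φ̂1^†‖_2. -/

import Mathlib

open Matrix MeasureTheory ProbabilityTheory

noncomputable section

/-- Euclidean norm of a vector. -/
noncomputable def vecNorm {a : ℕ} (v : Fin a → ℝ) : ℝ :=
  Real.sqrt (∑ i, v i ^ 2)

/-- Frobenius norm of a matrix. -/
noncomputable def frobNorm {a b : ℕ} (M : Matrix (Fin a) (Fin b) ℝ) : ℝ :=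
  Real.sqrt (∑ i, ∑ j, M i j ^ 2)

/-- Spectral norm (ℓ² operator norm) of a matrix. -/
noncomputable def specNorm {a b : ℕ} (M : Matrix (Fin a) (Fin b) ℝ) : ℝ :=
  ‖LinearMap.toContinuousLinearMap (Matrix.toEuclideanLin M)‖

/-- `mNorm true` is the spectral norm, `mNorm false` is the Frobenius norm. -/
noncomputable def mNorm (t : Bool) {a b : ℕ} (M : Matrix (Fin a) (Fin b) ℝ) : ℝ :=
  if t then specNorm M else frobNorm M

/-- The `i`-th largest singular value of a matrix (0-indexed, so `sval M 0` is the
largest singular value): the square root of the `i`-th largest eigenvalue of `MᵀM`. -/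
noncomputable def sval {a b : ℕ} (M : Matrix (Fin a) (Fin b) ℝ) (i : Fin b) : ℝ :=
  Real.sqrt ((Matrix.isHermitian_conjTranspose_mul_self M).eigenvalues
    (Tuple.sort (Matrix.isHermitian_conjTranspose_mul_self M).eigenvalues i.rev))

/-- The Moore–Penrose pseudoinverse of a full-row-rank matrix. -/
noncomputable def rowPinv {a b : ℕ} (M : Matrix (Fin a) (Fin b) ℝ) : Matrix (Fin b) (Fin a) ℝ :=
  Mᵀ * (M * Mᵀ)⁻¹

/-- The constant ω = ω₁ω₂, ω₁ = √(m−k) + √(k+p) + 7, ω₂ = 4e√(k+p)/(p+1). -/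
noncomputable def omegaConst (m k p : ℕ) : ℝ :=
  (Real.sqrt ((m : ℝ) - (k : ℝ)) + Real.sqrt ((k : ℝ) + (p : ℝ)) + 7) *
    (4 * Real.exp 1 * Real.sqrt ((k : ℝ) + (p : ℝ)) / ((p : ℝ) + 1))

/-- The constant C = √(k/(p−1)) + e√((m−k)(p+k))/p. -/
noncomputable def CConst (m k p : ℕ) : ℝ :=
  Real.sqrt ((k : ℝ) / ((p : ℝ) - 1)) +
    Real.exp 1 * Real.sqrt (((m : ℝ) - (k : ℝ)) * ((p : ℝ) + (k : ℝ))) / (p : ℝ)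

open Matrix in
private lemma sum_fin_split {n k : ℕ} (h : k ≤ n) (g : Fin n → ℝ) :
    ∑ j, g j = (∑ j : Fin k, g (Fin.castLE h j))
      + ∑ j : Fin (n - k), g ⟨k + j.1, by omega⟩ := by
  rw [← Equiv.sum_comp (finSumFinEquiv.trans (finCongr (by omega : k + (n - k) = n))) g,
    Fintype.sum_sum_type]
  congr 1

open Matrix in
private lemma specNorm_bound' {a b : ℕ} (M : Matrix (Fin a) (Fin b) ℝ) (v : Fin b → ℝ) :
    ∑ i, (M.mulVec v i) ^ 2 ≤ specNorm M ^ 2 * ∑ i, v i ^ 2 := by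
  unfold specNorm
  have h := (LinearMap.toContinuousLinearMap (Matrix.toEuclideanLin M)).le_opNorm
    ((WithLp.equiv 2 (Fin b → ℝ)).symm v)
  have h1 : ‖(LinearMap.toContinuousLinearMap (Matrix.toEuclideanLin M))
      ((WithLp.equiv 2 (Fin b → ℝ)).symm v)‖ = Real.sqrt (∑ i, (M.mulVec v i) ^ 2) := by
    rw [EuclideanSpace.norm_eq]
    congr 1
    refine Finset.sum_congr rfl fun i _ => ?_
    rw [Real.norm_eq_abs, sq_abs]
    congr 1
  have h2 : ‖(WithLp.equiv 2 (Fin b → ℝ)).symm v‖ = Real.sqrt (∑ i, v i ^ 2) := by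
    rw [EuclideanSpace.norm_eq]
    congr 1
    refine Finset.sum_congr rfl fun i _ => ?_
    rw [Real.norm_eq_abs, sq_abs]
    rfl
  rw [h1, h2] at h
  have h3 := pow_le_pow_left₀ (Real.sqrt_nonneg _) h 2
  rw [mul_pow, Real.sq_sqrt (by positivity), Real.sq_sqrt (by positivity)] at h3
  exact h3

open Matrix in
private lemma sorted_eig_le {N : ℕ} {H : Matrix (Fin N) (Fin N) ℝ} (hH : H.IsHermitian)
    (i : Fin N) (c : ℝ)
    (hq : ∀ x : Fin N → ℝ, (∀ j : Fin N, (i:ℕ) < (j:ℕ) → x j = 0) →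
      x ⬝ᵥ H.mulVec x ≤ c * (x ⬝ᵥ x)) :
    hH.eigenvalues (Tuple.sort hH.eigenvalues i) ≤ c := by
  classical
  set b := hH.eigenvectorBasis with hb
  set τ := Tuple.sort hH.eigenvalues with hτ
  set ev := hH.eigenvalues with hev
  have hi1 : (i:ℕ) + 1 ≤ N := i.2
  set C : Matrix (Fin (i:ℕ)) (Fin ((i:ℕ)+1)) ℝ :=
    fun j r => (b (τ (Fin.castLE (by omega) j))) (Fin.castLE hi1 r) with hC
  have hker : ∃ c0 : Fin ((i:ℕ)+1) → ℝ, c0 ≠ 0 ∧ C.mulVec c0 = 0 := by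
    have hrn := LinearMap.finrank_range_add_finrank_ker C.mulVecLin
    have h1 : Module.finrank ℝ (Fin ((i:ℕ)+1) → ℝ) = (i:ℕ)+1 := by
      simp [Module.finrank_fintype_fun_eq_card]
    have h2 : Module.finrank ℝ (LinearMap.range C.mulVecLin) ≤ (i:ℕ) := by
      have := Submodule.finrank_le (LinearMap.range C.mulVecLin)
      simpa [Module.finrank_fintype_fun_eq_card] using this
    have h3 : 0 < Module.finrank ℝ (LinearMap.ker C.mulVecLin) := by omega
    obtain ⟨⟨c0, hc0mem⟩, hc0ne⟩ := Module.finrank_pos_iff_exists_ne_zero.mp h3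
    exact ⟨c0, fun h0 => hc0ne ((Submodule.mk_eq_zero _ _).mpr h0), hc0mem⟩
  obtain ⟨c0, hc0, hCc0⟩ := hker
  set x : Fin N → ℝ := fun r => if h : (r:ℕ) < (i:ℕ)+1 then c0 ⟨r, h⟩ else 0 with hx
  have hsupp : ∀ j : Fin N, (i:ℕ) < (j:ℕ) → x j = 0 := by
    intro j hj; simp only [hx]; rw [dif_neg (by omega)]
  have hxne : x ≠ 0 := by
    intro h0
    apply hc0
    funext r
    have := congrFun h0 (Fin.castLE hi1 r)
    simp [hx, r.2] at this
    exact this (by rw [Fin.le_def]; have := r.2; simp only [Fin.val_castLE]; omega)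
  have horth : ∀ j : Fin N, (j:ℕ) < (i:ℕ) → (⇑(b (τ j)) : Fin N → ℝ) ⬝ᵥ x = 0 := by
    intro j hj
    have hrow := congrFun hCc0 ⟨j, hj⟩
    rw [Matrix.mulVec, Pi.zero_apply] at hrow
    rw [dotProduct, sum_fin_split hi1]
    have e2 : ∀ r : Fin (N - ((i:ℕ)+1)), x ⟨(i:ℕ)+1 + r.1, by omega⟩ = 0 := fun r => by
      simp only [hx]; rw [dif_neg (show ¬ ((i:ℕ)+1 + r.1 < (i:ℕ)+1) by omega)]
    simp only [e2, mul_zero, Finset.sum_const_zero, add_zero]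
    rw [← hrow]
    refine Finset.sum_congr rfl fun r _ => ?_
    simp only [dotProduct, hC]
    have h1 : τ (Fin.castLE (by omega) (⟨j, hj⟩ : Fin (i:ℕ))) = τ j := by congr 1
    have h2 : x (Fin.castLE hi1 r) = c0 r := by
      simp only [hx]; rw [dif_pos (show ((Fin.castLE hi1 r : Fin N) : ℕ) < (i:ℕ)+1 from r.2)]
      rfl
    rw [h1, h2]
  have hqx : x ⬝ᵥ H.mulVec x ≤ c * (x ⬝ᵥ x) := hq x hsupp
  have hHt : Hᵀ = H := by rw [← Matrix.conjTranspose_eq_transpose_of_trivial, hH.eq]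
  set xE : EuclideanSpace ℝ (Fin N) := (WithLp.equiv 2 (Fin N → ℝ)).symm x with hxE
  set HxE : EuclideanSpace ℝ (Fin N) := (WithLp.equiv 2 (Fin N → ℝ)).symm (H.mulVec x) with hHxE
  have e2 : ∀ j, (inner ℝ xE (b j) : ℝ) = (⇑(b j) : Fin N → ℝ) ⬝ᵥ x := by
    intro j
    simp [PiLp.inner_apply, dotProduct, hxE, mul_comm]
  have key1 : x ⬝ᵥ H.mulVec x = ∑ j, ev j * ((⇑(b j) : Fin N → ℝ) ⬝ᵥ x) ^ 2 := by
    have h := b.sum_inner_mul_inner xE HxE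
    have e1 : (inner ℝ xE HxE : ℝ) = x ⬝ᵥ H.mulVec x := by
      simp [PiLp.inner_apply, dotProduct, hxE, hHxE]
      exact Finset.sum_congr rfl fun _ _ => mul_comm _ _
    have e3 : ∀ j, (inner ℝ (b j) HxE : ℝ) = ev j * ((⇑(b j) : Fin N → ℝ) ⬝ᵥ x) := by
      intro j
      have hbj : H.mulVec (⇑(b j)) = ev j • ⇑(b j) := by
        rw [hb, hev]; exact hH.mulVec_eigenvectorBasis j
      have e4 : (inner ℝ (b j) HxE : ℝ) = (⇑(b j) : Fin N → ℝ) ⬝ᵥ H.mulVec x := by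
        simp [PiLp.inner_apply, dotProduct, hHxE]
        exact Finset.sum_congr rfl fun _ _ => mul_comm _ _
      rw [e4, Matrix.dotProduct_mulVec, ← Matrix.mulVec_transpose, hHt, hbj,
        smul_dotProduct, smul_eq_mul]
    rw [← e1, ← h]
    refine Finset.sum_congr rfl fun j _ => ?_
    rw [e2 j, e3 j, sq]
    ring
  have key2 : x ⬝ᵥ x = ∑ j, ((⇑(b j) : Fin N → ℝ) ⬝ᵥ x) ^ 2 := by
    have h := b.sum_inner_mul_inner xE xE
    have e1 : (inner ℝ xE xE : ℝ) = x ⬝ᵥ x := by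
      rw [hxE, PiLp.inner_apply]
      simp [dotProduct, sq]
    have e2' : ∀ j, (inner ℝ (b j) xE : ℝ) = (⇑(b j) : Fin N → ℝ) ⬝ᵥ x := by
      intro j
      simp [PiLp.inner_apply, dotProduct, hxE]
      exact Finset.sum_congr rfl fun _ _ => mul_comm _ _
    rw [← e1, ← h]
    refine Finset.sum_congr rfl fun j _ => ?_
    rw [e2 j, e2' j, sq]
  have key3 : ev (τ i) * (x ⬝ᵥ x) ≤ x ⬝ᵥ H.mulVec x := by
    rw [key1, key2, ← Equiv.sum_comp τ (fun j => ev j * ((⇑(b j) : Fin N → ℝ) ⬝ᵥ x) ^ 2),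
      ← Equiv.sum_comp τ (fun j => ((⇑(b j) : Fin N → ℝ) ⬝ᵥ x) ^ 2), Finset.mul_sum]
    refine Finset.sum_le_sum fun j _ => ?_
    by_cases hji : (j:ℕ) < (i:ℕ)
    · rw [horth j hji]
      simp
    · have hmono := Tuple.monotone_sort hH.eigenvalues
      have : ev (τ i) ≤ ev (τ j) := by
        have hle : i ≤ j := by
          rw [Fin.le_def]; omega
        have := hmono hle
        simpa [hτ, Function.comp] using this
      exact mul_le_mul_of_nonneg_right this (sq_nonneg _)
  have hxx : 0 < x ⬝ᵥ x := by
    obtain ⟨r, hr⟩ : ∃ r, x r ≠ 0 := Function.ne_iff.mp hxne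
    exact Finset.sum_pos' (fun s _ => mul_self_nonneg _)
      ⟨r, Finset.mem_univ r, mul_self_pos.mpr hr⟩
  exact (mul_le_mul_iff_of_pos_right hxx).mp (key3.trans hqx)
private lemma alpha_identity (t : ℝ) :
    (1 - 1/(1+t^2)) ^ 2 + (1/(1+t^2)) ^ 2 * t ^ 2 = t ^ 2 / (1 + t ^ 2) := by
  have hne : (1 + t^2) ≠ 0 := ne_of_gt (by positivity)
  field_simp
  ring

private lemma scale_identity (a b c s S : ℝ) (e : ℕ) (hc : c ≠ 0) :
    a * (b ^ e) ^ 2 * (s ^ 2 * ((1 / c ^ e) ^ 2 * S)) = a * ((b / c) ^ e * s) ^ 2 * S := by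
  have hce : c ^ e ≠ 0 := pow_ne_zero _ hc
  ring

set_option maxHeartbeats 2000000 in
theorem ruqlp_cos_tan_theta_bound
    (m n k p q : ℕ) (hmn : n ≤ m) (hk1 : 1 ≤ k) (hkn : k < n)
    (d : ℕ) (hd : d = k + p) (hdn : d < n)
    (A U : Matrix (Fin m) (Fin n) ℝ) (V : Matrix (Fin n) (Fin n) ℝ) (σ : Fin n → ℝ)
    (hU : Uᵀ * U = 1) (hV : Vᵀ * V = 1)
    (hσ : Antitone σ) (hσ0 : ∀ i, 0 ≤ σ i)
    (hA : A = U * Matrix.diagonal σ * Vᵀ)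
    (hgap : σ ⟨k, hkn⟩ < σ ⟨k - 1, by omega⟩)
    (Φ : Matrix (Fin m) (Fin d) ℝ)
    (Uk : Matrix (Fin m) (Fin k) ℝ) (hUk : Uk = U.submatrix id (Fin.castLE hkn.le))
    (Uperp : Matrix (Fin m) (Fin (n - k)) ℝ)
    (hUperp : Uperp = U.submatrix id fun i => ⟨k + i.1, by have := i.2; omega⟩)
    (Φ1 : Matrix (Fin k) (Fin d) ℝ) (hΦ1 : Φ1 = Ukᵀ * Φ)
    (Φ2 : Matrix (Fin (n - k)) (Fin d) ℝ) (hΦ2 : Φ2 = Uperpᵀ * Φ)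
    (hrank : Φ1.rank = k)
    (Pbar : Matrix (Fin n) (Fin d) ℝ) (hPbar : Pbarᵀ * Pbar = 1)
    (hPrange : LinearMap.range (Matrix.mulVecLin Pbar)
      = LinearMap.range (Matrix.mulVecLin ((Aᵀ * A) ^ q * Aᵀ * Φ)))
    (Q : Matrix (Fin m) (Fin d) ℝ) (R : Matrix (Fin d) (Fin d) ℝ)
    (hQ : Qᵀ * Q = 1) (hQR : A * Pbar = Q * R)
    (hRtri : ∀ i j : Fin d, j < i → R i j = 0)
    :
    ∀ i : Fin k,
      1 / Real.sqrt (1 + (σ ⟨k, hkn⟩ / σ (Fin.castLE hkn.le i)) ^ (4 * q + 4) * specNorm (Φ2 * rowPinv Φ1) ^ 2) ≤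
          Real.cos (Real.arcsin (sval ((1 - Q * Qᵀ) * Uk) i.rev)) ∧
        Real.tan (Real.arcsin (sval ((1 - Q * Qᵀ) * Uk) i.rev)) ≤
          (σ ⟨k, hkn⟩ / σ (Fin.castLE hkn.le i)) ^ (2 * q + 2) * specNorm (Φ2 * rowPinv Φ1) := by
  classical
  have hdot_nonneg : ∀ {N : ℕ} (z : Fin N → ℝ), 0 ≤ z ⬝ᵥ z := fun z =>
    Finset.sum_nonneg fun s _ => mul_self_nonneg _
  -- σ positivity
  have hσk1pos : 0 < σ ⟨k - 1, by omega⟩ := lt_of_le_of_lt (hσ0 _) hgap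
  have hσpos : ∀ j : Fin n, (j : ℕ) < k → 0 < σ j := by
    intro j hj
    refine lt_of_lt_of_le hσk1pos (hσ ?_)
    rw [Fin.le_def]
    simp only []
    omega
  -- pseudoinverse identity
  have hpinv : Φ1 * rowPinv Φ1 = 1 := by
    have hrankrow : LinearIndependent ℝ (fun i : Fin k => Φ1 i) := by
      apply linearIndependent_iff_card_eq_finrank_span.mpr
      have h1 := Φ1.rank_eq_finrank_span_row
      rw [hrank] at h1
      rw [Set.finrank, Fintype.card_fin]; exact h1
    have hvm : Function.Injective Φ1.vecMul := Matrix.vecMul_injective_iff.mpr hrankrow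
    have hB0 : IsUnit (Φ1 * Φ1ᵀ) := by
      apply Matrix.mulVec_injective_iff_isUnit.mp
      intro v w hvw
      have hz : (Φ1 * Φ1ᵀ) *ᵥ (v - w) = 0 := by
        rw [Matrix.mulVec_sub, hvw, sub_self]
      have hq0 : (v - w) ⬝ᵥ ((Φ1 * Φ1ᵀ) *ᵥ (v - w)) = 0 := by
        rw [hz, dotProduct_zero]
      rw [← Matrix.mulVec_mulVec, Matrix.dotProduct_mulVec, Matrix.mulVec_transpose] at hq0
      have hw0 : (v - w) ᵥ* Φ1 = 0 := by
        funext r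
        have := (Finset.sum_eq_zero_iff_of_nonneg
          (fun s _ => mul_self_nonneg (((v - w) ᵥ* Φ1) s))).mp hq0 r (Finset.mem_univ r)
        exact mul_self_eq_zero.mp this
      have := hvm (show Φ1.vecMul (v - w) = Φ1.vecMul 0 by
        rw [show Φ1.vecMul (v-w) = (v - w) ᵥ* Φ1 from rfl, hw0]
        simp [Matrix.zero_vecMul])
      rwa [sub_eq_zero] at this
    have hB0inv : (Φ1 * Φ1ᵀ) * (Φ1 * Φ1ᵀ)⁻¹ = 1 :=
      Matrix.mul_nonsing_inv _ ((Matrix.isUnit_iff_isUnit_det _).mp hB0)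
    rw [rowPinv, ← Matrix.mul_assoc]
    exact hB0inv
  -- SVD identities
  have hVVt : V * Vᵀ = 1 := mul_eq_one_comm.mp hV
  have hVcancel : ∀ {c : ℕ} (X : Matrix (Fin n) (Fin c) ℝ), Vᵀ * (V * X) = X := by
    intro c X; rw [← Matrix.mul_assoc, hV, Matrix.one_mul]
  have hUcancel : ∀ {c : ℕ} (X : Matrix (Fin n) (Fin c) ℝ), Uᵀ * (U * X) = X := by
    intro c X; rw [← Matrix.mul_assoc, hU, Matrix.one_mul]
  have hDD : ∀ (a b : Fin n → ℝ) {c : ℕ} (X : Matrix (Fin n) (Fin c) ℝ),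
      Matrix.diagonal a * (Matrix.diagonal b * X) = Matrix.diagonal (fun j => a j * b j) * X := by
    intro a b c X
    rw [← Matrix.mul_assoc, Matrix.diagonal_mul_diagonal]
  have hAt : Aᵀ = V * (Matrix.diagonal σ * Uᵀ) := by
    rw [hA, Matrix.transpose_mul, Matrix.transpose_mul, Matrix.transpose_transpose,
      Matrix.diagonal_transpose]
  have hAtA : Aᵀ * A = V * (Matrix.diagonal (fun j => σ j ^ 2) * Vᵀ) := by
    rw [hAt, hA]
    simp only [Matrix.mul_assoc]
    rw [hUcancel, hDD]
    congr 2
    funext j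
    ring
  have hq2 : ∀ qq : ℕ, (Aᵀ * A) ^ qq = V * (Matrix.diagonal (fun j => σ j ^ (2 * qq)) * Vᵀ) := by
    intro qq
    induction qq with
    | zero =>
      rw [pow_zero]
      have h1 : (fun j : Fin n => σ j ^ (2 * 0)) = fun _ => (1:ℝ) := by funext j; simp
      rw [h1, Matrix.diagonal_one, Matrix.one_mul, hVVt]
    | succ qq ih =>
      rw [pow_succ, ih, hAtA]
      simp only [Matrix.mul_assoc]
      rw [hVcancel, hDD]
      have he : (fun j : Fin n => σ j ^ (2 * qq) * σ j ^ 2)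
          = fun j : Fin n => σ j ^ (2 * (qq + 1)) := by
        funext j
        rw [← pow_add]
        congr 1
      rw [he]
  have hBform : A * ((Aᵀ * A) ^ q * Aᵀ * Φ)
      = U * (Matrix.diagonal (fun j => σ j ^ (2 * q + 2)) * (Uᵀ * Φ)) := by
    rw [hq2 q, hAt, hA]
    simp only [Matrix.mul_assoc]
    rw [hVcancel, hVcancel, hDD, hDD]
    have he : (fun j : Fin n => σ j * σ j ^ (2 * q) * σ j)
        = fun j : Fin n => σ j ^ (2 * q + 2) := by
      funext j
      rw [show 2 * q + 2 = 1 + 2 * q + 1 from by omega, pow_add, pow_add]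
      simp
    rw [he]
  -- range fact
  have hrange : ∀ u : Fin d → ℝ, ∃ y : Fin d → ℝ,
      Q *ᵥ y = (U * (Matrix.diagonal (fun j => σ j ^ (2 * q + 2)) * (Uᵀ * Φ))) *ᵥ u := by
    intro u
    have hmem : ((Aᵀ * A) ^ q * Aᵀ * Φ) *ᵥ u
        ∈ LinearMap.range (Matrix.mulVecLin ((Aᵀ * A) ^ q * Aᵀ * Φ)) :=
      ⟨u, Matrix.mulVecLin_apply _ _⟩
    rw [← hPrange] at hmem
    obtain ⟨y0, hy0⟩ := hmem
    have hy0' : Pbar *ᵥ y0 = ((Aᵀ * A) ^ q * Aᵀ * Φ) *ᵥ u := by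
      simpa [Matrix.mulVecLin_apply] using hy0
    refine ⟨R *ᵥ y0, ?_⟩
    calc Q *ᵥ (R *ᵥ y0) = (Q * R) *ᵥ y0 := Matrix.mulVec_mulVec _ _ _
      _ = (A * Pbar) *ᵥ y0 := by rw [hQR]
      _ = A *ᵥ (Pbar *ᵥ y0) := (Matrix.mulVec_mulVec _ _ _).symm
      _ = A *ᵥ (((Aᵀ * A) ^ q * Aᵀ * Φ) *ᵥ u) := by rw [hy0']
      _ = (A * ((Aᵀ * A) ^ q * Aᵀ * Φ)) *ᵥ u := Matrix.mulVec_mulVec _ _ _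
      _ = _ := by rw [hBform]
  -- projection bound
  have hproj : ∀ (v : Fin m → ℝ) (y : Fin d → ℝ),
      ((1 - Q * Qᵀ) *ᵥ v) ⬝ᵥ ((1 - Q * Qᵀ) *ᵥ v) ≤ (v - Q *ᵥ y) ⬝ᵥ (v - Q *ᵥ y) := by
    intro v y
    have hPQ : (1 - Q * Qᵀ) * Q = 0 := by
      rw [Matrix.sub_mul, Matrix.one_mul, Matrix.mul_assoc, hQ, Matrix.mul_one, sub_self]
    have hPw : (1 - Q * Qᵀ) *ᵥ v = (1 - Q * Qᵀ) *ᵥ (v - Q *ᵥ y) := by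
      rw [Matrix.mulVec_sub]
      have h0 : (1 - Q * Qᵀ) *ᵥ (Q *ᵥ y) = 0 := by
        rw [Matrix.mulVec_mulVec, hPQ, Matrix.zero_mulVec]
      rw [h0, sub_zero]
    rw [hPw]
    set w : Fin m → ℝ := v - Q *ᵥ y with hw
    have hPP : (Q * Qᵀ) * (Q * Qᵀ) = Q * Qᵀ := by
      rw [Matrix.mul_assoc, ← Matrix.mul_assoc Qᵀ Q Qᵀ, hQ, Matrix.one_mul]
    have hsymm : (1 - Q * Qᵀ)ᵀ = 1 - Q * Qᵀ := by
      rw [Matrix.transpose_sub, Matrix.transpose_one, Matrix.transpose_mul,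
        Matrix.transpose_transpose]
    have hidem : (1 - Q * Qᵀ) * (1 - Q * Qᵀ) = 1 - Q * Qᵀ := by
      rw [Matrix.sub_mul, Matrix.one_mul, Matrix.mul_sub, Matrix.mul_one, hPP]
      abel
    have h1 : ((1 - Q * Qᵀ) *ᵥ w) ⬝ᵥ ((1 - Q * Qᵀ) *ᵥ w) = ((1 - Q * Qᵀ) *ᵥ w) ⬝ᵥ w := by
      rw [Matrix.dotProduct_mulVec, ← Matrix.mulVec_transpose, hsymm,
        Matrix.mulVec_mulVec, hidem]
    rw [h1, Matrix.sub_mulVec, Matrix.one_mulVec, sub_dotProduct]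
    have h2 : ((Q * Qᵀ) *ᵥ w) ⬝ᵥ w = (Qᵀ *ᵥ w) ⬝ᵥ (Qᵀ *ᵥ w) := by
      rw [← Matrix.mulVec_mulVec, dotProduct_comm, Matrix.dotProduct_mulVec,
        ← Matrix.mulVec_transpose]
    rw [h2]
    linarith [hdot_nonneg (Qᵀ *ᵥ w)]
  -- block rows of Uᵀ * Φ
  have hrow1 : ∀ (j : Fin k) (cd : Fin d), (Uᵀ * Φ) (Fin.castLE hkn.le j) cd = Φ1 j cd := by
    intro j cd
    rw [hΦ1, hUk]
    simp [Matrix.mul_apply, Matrix.transpose_apply, Matrix.submatrix_apply]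
  have hrow2 : ∀ (j : Fin (n - k)) (cd : Fin d),
      (Uᵀ * Φ) ⟨k + j.1, by have := j.2; omega⟩ cd = Φ2 j cd := by
    intro j cd
    rw [hΦ2, hUperp]
    simp [Matrix.mul_apply, Matrix.transpose_apply, Matrix.submatrix_apply]
  -- main part
  intro i
  set M : Matrix (Fin m) (Fin k) ℝ := (1 - Q * Qᵀ) * Uk with hM
  have hik : ((Fin.castLE hkn.le i) : ℕ) < k := i.2
  have hσipos : 0 < σ (Fin.castLE hkn.le i) := hσpos _ hik
  have hσine : σ (Fin.castLE hkn.le i) ≠ 0 := ne_of_gt hσipos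
  set t : ℝ := (σ ⟨k, hkn⟩ / σ (Fin.castLE hkn.le i)) ^ (2 * q + 2)
      * specNorm (Φ2 * rowPinv Φ1) with htdef
  have hsn0 : 0 ≤ specNorm (Φ2 * rowPinv Φ1) := norm_nonneg _
  have ht0 : 0 ≤ t :=
    mul_nonneg (pow_nonneg (div_nonneg (hσ0 _) (hσ0 _)) _) hsn0
  have h1t : (0:ℝ) < 1 + t ^ 2 := by positivity
  -- the quadratic form bound
  have hform : ∀ x : Fin k → ℝ, (∀ j : Fin k, (i : ℕ) < (j : ℕ) → x j = 0) →
      x ⬝ᵥ (Mᵀ * M) *ᵥ x ≤ (t ^ 2 / (1 + t ^ 2)) * (x ⬝ᵥ x) := by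
    intro x hx
    set w : Fin k → ℝ := fun j => x j / σ (Fin.castLE hkn.le j) ^ (2 * q + 2) with hwdef
    have hxw : ∀ j : Fin k, σ (Fin.castLE hkn.le j) ^ (2 * q + 2) * w j = x j := by
      intro j
      by_cases hji : (i : ℕ) < (j : ℕ)
      · rw [hx j hji]
        simp [hwdef, hx j hji]
      · have hjpos : (0:ℝ) < σ (Fin.castLE hkn.le j) := hσpos _ j.2
        rw [hwdef]
        rw [mul_comm, div_mul_cancel₀]
        positivity
    set u : Fin d → ℝ := (rowPinv Φ1) *ᵥ w with hu
    set α : ℝ := 1 / (1 + t ^ 2) with hα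
    obtain ⟨y, hy⟩ := hrange (α • u)
    have hL : x ⬝ᵥ (Mᵀ * M) *ᵥ x = (M *ᵥ x) ⬝ᵥ (M *ᵥ x) := by
      rw [← Matrix.mulVec_mulVec, Matrix.dotProduct_mulVec, Matrix.vecMul_transpose]
    have hMx : M *ᵥ x = (1 - Q * Qᵀ) *ᵥ (Uk *ᵥ x) := (Matrix.mulVec_mulVec _ _ _).symm
    have hle1 : (M *ᵥ x) ⬝ᵥ (M *ᵥ x) ≤ (Uk *ᵥ x - Q *ᵥ y) ⬝ᵥ (Uk *ᵥ x - Q *ᵥ y) := by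
      rw [hMx]; exact hproj _ y
    -- identify the difference vector
    set ext : Fin n → ℝ := fun r => if h : (r : ℕ) < k then x ⟨r, h⟩ else 0 with hextdef
    have hUkx : Uk *ᵥ x = U *ᵥ ext := by
      funext r
      show (fun j => Uk r j) ⬝ᵥ x = (fun j => U r j) ⬝ᵥ ext
      rw [dotProduct, dotProduct, sum_fin_split hkn.le]
      have hz2 : ∀ j : Fin (n - k), U r (⟨k + j.1, by have := j.2; omega⟩ : Fin n)
          * ext ⟨k + j.1, by have := j.2; omega⟩ = 0 := by
        intro j
        have : ext ⟨k + j.1, by have := j.2; omega⟩ = 0 := by simp [hextdef]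
        rw [this, mul_zero]
      rw [Finset.sum_congr rfl (fun j _ => hz2 j), Finset.sum_const_zero, add_zero]
      refine Finset.sum_congr rfl fun j _ => ?_
      have h1 : ext (Fin.castLE hkn.le j) = x j := by simp [hextdef, Fin.castLE]
      rw [h1, hUk]
      rfl
    set hvec : Fin n → ℝ := (Uᵀ * Φ) *ᵥ u with hhvec
    have hh1 : ∀ j : Fin k, hvec (Fin.castLE hkn.le j) = w j := by
      intro j
      have e1 : hvec (Fin.castLE hkn.le j) = (fun cd => (Uᵀ * Φ) (Fin.castLE hkn.le j) cd) ⬝ᵥ u := rfl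
      rw [e1]
      have e2 : (fun cd => (Uᵀ * Φ) (Fin.castLE hkn.le j) cd) = fun cd => Φ1 j cd :=
        funext (hrow1 j)
      rw [e2]
      have e3 : (fun cd => Φ1 j cd) ⬝ᵥ u = (Φ1 *ᵥ u) j := rfl
      rw [e3, hu, Matrix.mulVec_mulVec, hpinv, Matrix.one_mulVec]
    have hh2 : ∀ j : Fin (n - k), hvec ⟨k + j.1, by have := j.2; omega⟩
        = ((Φ2 * rowPinv Φ1) *ᵥ w) j := by
      intro j
      have e1 : hvec ⟨k + j.1, by have := j.2; omega⟩
          = (fun cd => (Uᵀ * Φ) (⟨k + j.1, by have := j.2; omega⟩ : Fin n) cd) ⬝ᵥ u := rfl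
      rw [e1]
      have e2 : (fun cd => (Uᵀ * Φ) (⟨k + j.1, by have := j.2; omega⟩ : Fin n) cd)
          = fun cd => Φ2 j cd := funext (hrow2 j)
      rw [e2]
      have e3 : (fun cd => Φ2 j cd) ⬝ᵥ u = (Φ2 *ᵥ u) j := rfl
      rw [e3, hu, Matrix.mulVec_mulVec]
    have hz : Q *ᵥ y = U *ᵥ (α • (Matrix.diagonal (fun j => σ j ^ (2 * q + 2)) *ᵥ hvec)) := by
      rw [hy, hhvec]
      rw [← Matrix.mulVec_mulVec, ← Matrix.mulVec_mulVec,
        Matrix.mulVec_smul, Matrix.mulVec_smul]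
    set c' : Fin n → ℝ :=
      ext - α • (Matrix.diagonal (fun j => σ j ^ (2 * q + 2)) *ᵥ hvec) with hc'
    have hdiff : Uk *ᵥ x - Q *ᵥ y = U *ᵥ c' := by
      rw [hUkx, hz, hc', Matrix.mulVec_sub]
    have hnorm : (U *ᵥ c') ⬝ᵥ (U *ᵥ c') = c' ⬝ᵥ c' := by
      rw [Matrix.dotProduct_mulVec, ← Matrix.mulVec_transpose, Matrix.mulVec_mulVec, hU,
        Matrix.one_mulVec]
    have hc'1 : ∀ j : Fin k, c' (Fin.castLE hkn.le j) = (1 - α) * x j := by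
      intro j
      simp only [hc', Pi.sub_apply, Pi.smul_apply, smul_eq_mul]
      rw [Matrix.mulVec_diagonal, hh1 j]
      have hext : ext (Fin.castLE hkn.le j) = x j := by simp [hextdef, Fin.castLE]
      rw [hext, hxw j]
      ring
    have hc'2 : ∀ j : Fin (n - k), c' ⟨k + j.1, by have := j.2; omega⟩
        = -(α * (σ ⟨k + j.1, by have := j.2; omega⟩ ^ (2 * q + 2)
            * ((Φ2 * rowPinv Φ1) *ᵥ w) j)) := by
      intro j
      simp only [hc', Pi.sub_apply, Pi.smul_apply, smul_eq_mul]
      rw [Matrix.mulVec_diagonal, hh2 j]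
      have hext : ext ⟨k + j.1, by have := j.2; omega⟩ = 0 := by simp [hextdef]
      rw [hext]
      ring
    -- the sum bound
    have hxx : x ⬝ᵥ x = ∑ j, x j ^ 2 := by
      simp [dotProduct, sq]
    have hwsum : ∑ j, w j ^ 2
        ≤ (1 / σ (Fin.castLE hkn.le i) ^ (2 * q + 2)) ^ 2 * ∑ j, x j ^ 2 := by
      rw [Finset.mul_sum]
      refine Finset.sum_le_sum fun j _ => ?_
      by_cases hji : (i : ℕ) < (j : ℕ)
      · simp [hwdef, hx j hji]
      · have hσj : σ (Fin.castLE hkn.le i) ≤ σ (Fin.castLE hkn.le j) := by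
          refine hσ ?_
          rw [Fin.le_def]
          simpa using Nat.not_lt.mp hji
        have hee : σ (Fin.castLE hkn.le i) ^ (2 * q + 2)
            ≤ σ (Fin.castLE hkn.le j) ^ (2 * q + 2) :=
          pow_le_pow_left₀ (le_of_lt hσipos) hσj _
        have hie : (0:ℝ) < σ (Fin.castLE hkn.le i) ^ (2 * q + 2) := pow_pos hσipos _
        calc w j ^ 2 = x j ^ 2 / (σ (Fin.castLE hkn.le j) ^ (2 * q + 2)) ^ 2 := by
              rw [hwdef]; rw [div_pow]
          _ ≤ x j ^ 2 / (σ (Fin.castLE hkn.le i) ^ (2 * q + 2)) ^ 2 := by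
              apply div_le_div_of_nonneg_left (sq_nonneg _) (by positivity)
              exact pow_le_pow_left₀ (le_of_lt hie) hee 2
          _ = 1 / σ (Fin.castLE hkn.le i) ^ (2 * q + 2) * x j ^ 2 / σ (Fin.castLE hkn.le i) ^ (2 * q + 2) := by
              ring
          _ = (1 / σ (Fin.castLE hkn.le i) ^ (2 * q + 2)) ^ 2 * x j ^ 2 := by
              ring
    have hcc : c' ⬝ᵥ c' ≤ (1 - α) ^ 2 * (x ⬝ᵥ x) + α ^ 2 * t ^ 2 * (x ⬝ᵥ x) := by
      rw [dotProduct, sum_fin_split hkn.le (fun r => c' r * c' r)]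
      have hfirst : (∑ j : Fin k, c' (Fin.castLE hkn.le j) * c' (Fin.castLE hkn.le j))
          = (1 - α) ^ 2 * (x ⬝ᵥ x) := by
        rw [dotProduct, Finset.mul_sum]
        refine Finset.sum_congr rfl fun j _ => ?_
        rw [hc'1 j]; ring
      have hsecond : (∑ j : Fin (n - k),
            c' (⟨k + j.1, by have := j.2; omega⟩ : Fin n)
            * c' (⟨k + j.1, by have := j.2; omega⟩ : Fin n))
          ≤ α ^ 2 * t ^ 2 * (x ⬝ᵥ x) := by
        have hb1 : (∑ j : Fin (n - k),
              c' (⟨k + j.1, by have := j.2; omega⟩ : Fin n)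
              * c' (⟨k + j.1, by have := j.2; omega⟩ : Fin n))
            = ∑ j : Fin (n - k), α ^ 2 * ((σ (⟨k + j.1, by have := j.2; omega⟩ : Fin n) ^ (2 * q + 2)) ^ 2
              * (((Φ2 * rowPinv Φ1) *ᵥ w) j) ^ 2) := by
          refine Finset.sum_congr rfl fun j _ => ?_
          rw [hc'2 j]; ring
        rw [hb1]
        have hb2 : (∑ j : Fin (n - k), α ^ 2 * ((σ (⟨k + j.1, by have := j.2; omega⟩ : Fin n) ^ (2 * q + 2)) ^ 2
              * (((Φ2 * rowPinv Φ1) *ᵥ w) j) ^ 2))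
            ≤ ∑ j : Fin (n - k), α ^ 2 * ((σ (⟨k, hkn⟩ : Fin n) ^ (2 * q + 2)) ^ 2
              * (((Φ2 * rowPinv Φ1) *ᵥ w) j) ^ 2) := by
          refine Finset.sum_le_sum fun j _ => ?_
          have hσj : σ (⟨k + j.1, by have := j.2; omega⟩ : Fin n) ≤ σ (⟨k, hkn⟩ : Fin n) := by
            refine hσ ?_
            rw [Fin.le_def]
            simp
          have hee : σ (⟨k + j.1, by have := j.2; omega⟩ : Fin n) ^ (2 * q + 2)
              ≤ σ (⟨k, hkn⟩ : Fin n) ^ (2 * q + 2) := pow_le_pow_left₀ (hσ0 _) hσj _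
          have hee2 : (σ (⟨k + j.1, by have := j.2; omega⟩ : Fin n) ^ (2 * q + 2)) ^ 2
              ≤ (σ (⟨k, hkn⟩ : Fin n) ^ (2 * q + 2)) ^ 2 :=
            pow_le_pow_left₀ (pow_nonneg (hσ0 _) _) hee 2
          exact mul_le_mul_of_nonneg_left
            (mul_le_mul_of_nonneg_right hee2 (sq_nonneg _)) (sq_nonneg _)
        refine le_trans hb2 ?_
        have hb3 : (∑ j : Fin (n - k), α ^ 2 * ((σ (⟨k, hkn⟩ : Fin n) ^ (2 * q + 2)) ^ 2
              * (((Φ2 * rowPinv Φ1) *ᵥ w) j) ^ 2))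
            = α ^ 2 * (σ (⟨k, hkn⟩ : Fin n) ^ (2 * q + 2)) ^ 2
              * ∑ j : Fin (n - k), (((Φ2 * rowPinv Φ1) *ᵥ w) j) ^ 2 := by
          rw [Finset.mul_sum]
          refine Finset.sum_congr rfl fun j _ => ?_
          ring
        rw [hb3]
        have hb4 := specNorm_bound' (Φ2 * rowPinv Φ1) w
        have hb5 : α ^ 2 * (σ (⟨k, hkn⟩ : Fin n) ^ (2 * q + 2)) ^ 2
              * ∑ j : Fin (n - k), (((Φ2 * rowPinv Φ1) *ᵥ w) j) ^ 2
            ≤ α ^ 2 * (σ (⟨k, hkn⟩ : Fin n) ^ (2 * q + 2)) ^ 2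
              * (specNorm (Φ2 * rowPinv Φ1) ^ 2 * ∑ j, w j ^ 2) :=
          mul_le_mul_of_nonneg_left hb4 (by positivity)
        refine le_trans hb5 ?_
        have hb6 : α ^ 2 * (σ (⟨k, hkn⟩ : Fin n) ^ (2 * q + 2)) ^ 2
              * (specNorm (Φ2 * rowPinv Φ1) ^ 2 * ∑ j, w j ^ 2)
            ≤ α ^ 2 * (σ (⟨k, hkn⟩ : Fin n) ^ (2 * q + 2)) ^ 2
              * (specNorm (Φ2 * rowPinv Φ1) ^ 2
                * ((1 / σ (Fin.castLE hkn.le i) ^ (2 * q + 2)) ^ 2 * ∑ j, x j ^ 2)) := by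
          refine mul_le_mul_of_nonneg_left ?_ (by positivity)
          exact mul_le_mul_of_nonneg_left hwsum (by positivity)
        refine le_trans hb6 (le_of_eq ?_)
        rw [hxx, htdef]
        exact scale_identity _ _ _ _ _ _ hσine
      calc (∑ j : Fin k, (fun r => c' r * c' r) (Fin.castLE hkn.le j))
            + ∑ j : Fin (n - k), (fun r => c' r * c' r) (⟨k + j.1, by have := j.2; omega⟩ : Fin n)
          = (∑ j : Fin k, c' (Fin.castLE hkn.le j) * c' (Fin.castLE hkn.le j))
            + ∑ j : Fin (n - k), c' (⟨k + j.1, by have := j.2; omega⟩ : Fin n)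
              * c' (⟨k + j.1, by have := j.2; omega⟩ : Fin n) := rfl
        _ ≤ (1 - α) ^ 2 * (x ⬝ᵥ x) + α ^ 2 * t ^ 2 * (x ⬝ᵥ x) := by
            rw [hfirst]
            exact (add_le_add_iff_left _).mpr hsecond
    have hαe : (1 - α) ^ 2 + α ^ 2 * t ^ 2 = t ^ 2 / (1 + t ^ 2) := by
      rw [hα]
      exact alpha_identity t
    calc x ⬝ᵥ (Mᵀ * M) *ᵥ x = (M *ᵥ x) ⬝ᵥ (M *ᵥ x) := hL
      _ ≤ (Uk *ᵥ x - Q *ᵥ y) ⬝ᵥ (Uk *ᵥ x - Q *ᵥ y) := hle1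
      _ = c' ⬝ᵥ c' := by rw [hdiff, hnorm]
      _ ≤ (1 - α) ^ 2 * (x ⬝ᵥ x) + α ^ 2 * t ^ 2 * (x ⬝ᵥ x) := hcc
      _ = (t ^ 2 / (1 + t ^ 2)) * (x ⬝ᵥ x) := by rw [← hαe]; ring
  have hμle := sorted_eig_le (Matrix.isHermitian_conjTranspose_mul_self M) i
    (t ^ 2 / (1 + t ^ 2)) hform
  set μ := (Matrix.isHermitian_conjTranspose_mul_self M).eigenvalues
      (Tuple.sort (Matrix.isHermitian_conjTranspose_mul_self M).eigenvalues i) with hμdef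
  have hμ0 : 0 ≤ μ := by
    have hpsd : (Mᵀ * M).PosSemidef := by
      have h := Matrix.posSemidef_conjTranspose_mul_self M
      rwa [Matrix.conjTranspose_eq_transpose_of_trivial] at h
    exact hpsd.eigenvalues_nonneg _
  have hsval : sval M i.rev = Real.sqrt μ := by
    simp only [sval, Fin.rev_rev, hμdef]
  have hμt : μ * (1 + t ^ 2) ≤ t ^ 2 := (le_div_iff₀ h1t).mp hμle
  have h1μ : (1 + t ^ 2)⁻¹ ≤ 1 - μ := by
    have h2 : (1:ℝ) ≤ (1 - μ) * (1 + t ^ 2) := by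
      have hexp : (1 - μ) * (1 + t ^ 2) = 1 + t ^ 2 - μ * (1 + t ^ 2) := by ring
      rw [hexp]
      have ht2 : (0:ℝ) ≤ t ^ 2 := sq_nonneg t
      linarith [hμt]
    calc (1 + t ^ 2)⁻¹ = 1 / (1 + t ^ 2) := (one_div _).symm
      _ ≤ ((1 - μ) * (1 + t ^ 2)) / (1 + t ^ 2) := (div_le_div_iff_of_pos_right h1t).mpr h2
      _ = 1 - μ := mul_div_cancel_right₀ _ (ne_of_gt h1t)
  have h1μ0 : (0:ℝ) < 1 - μ := lt_of_lt_of_le (inv_pos.mpr h1t) h1μ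
  constructor
  · rw [hsval, Real.cos_arcsin, Real.sq_sqrt hμ0]
    have hδ : (σ ⟨k, hkn⟩ / σ (Fin.castLE hkn.le i)) ^ (4 * q + 4)
        * specNorm (Φ2 * rowPinv Φ1) ^ 2 = t ^ 2 := by
      rw [htdef, mul_pow, ← pow_mul,
        show (2 * q + 2) * 2 = 4 * q + 4 from by omega]
    rw [hδ, one_div, ← Real.sqrt_inv]
    exact Real.sqrt_le_sqrt h1μ
  · rw [hsval, Real.tan_arcsin, Real.sq_sqrt hμ0]
    rw [div_le_iff₀ (Real.sqrt_pos.mpr h1μ0)]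
    have hle : Real.sqrt μ ≤ Real.sqrt (t ^ 2 * (1 - μ)) := by
      apply Real.sqrt_le_sqrt
      have hexp : t ^ 2 * (1 - μ) = t ^ 2 - μ * (1 + t ^ 2) + μ := by ring
      rw [hexp]
      linarith [hμt]
    rwa [Real.sqrt_mul (sq_nonneg t), Real.sqrt_sq ht0] at hle
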